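/- Let u, t, v ∈ ℝ² be such that u, t are linearly independent and t, v are linearly independent, and let a₁, b₁, a₂, b₂ ∈ ℝ with b₁ = a₂. Then there exists a vector w ∈ ℝ² with ⟨u, w⟩ = a₁, ⟨t, w⟩ = b₁ and ⟨v, w⟩ = b₂ if and only if det[u t]·b₂ + det[t v]·a₁ + det[v u]·b₁ = 0. -/

import Mathlib

/-- The determinant of the 2×2 matrix with columns `a` and `b`. -/
def det2 (a b : ℝ × ℝ) : ℝ := a.1 * b.2 - a.2 * b.1

/-- The Euclidean inner product on `ℝ²`. -/
def dot2 (a b : ℝ × ℝ) : ℝ := a.1 * b.1 + a.2 * b.2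

lemma li_det (x y : ℝ × ℝ) (h : LinearIndependent ℝ ![x, y]) : det2 x y ≠ 0 := by
  rw [LinearIndependent.pair_iff] at h
  intro hd
  have hd' : x.1 * y.2 - x.2 * y.1 = 0 := hd
  have h1 := h y.2 (-x.2) (by
    refine Prod.ext ?_ ?_ <;> simp <;> nlinarith)
  have h2 := h (-y.1) x.1 (by
    refine Prod.ext ?_ ?_ <;> simp <;> nlinarith)
  have := h 1 0 (by
    refine Prod.ext ?_ ?_ <;> simp [h1.2, h2.2, Prod.ext_iff] <;> nlinarith [h1.2, h2.2])
  exact one_ne_zero this.1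

/-- For `u, t` linearly independent and `t, v` linearly independent and `b₁ = a₂`:
there exists `w ∈ ℝ²` with `⟨u,w⟩ = a₁`, `⟨t,w⟩ = b₁`, `⟨v,w⟩ = b₂` if and only if
`det[u t]·b₂ + det[t v]·a₁ + det[v u]·b₁ = 0`. -/
theorem stmt2 (u t v : ℝ × ℝ)
    (hut : LinearIndependent ℝ ![u, t]) (htv : LinearIndependent ℝ ![t, v])
    (a₁ b₁ a₂ b₂ : ℝ) (hb : b₁ = a₂) :
    (∃ w : ℝ × ℝ, dot2 u w = a₁ ∧ dot2 t w = b₁ ∧ dot2 v w = b₂) ↔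
      det2 u t * b₂ + det2 t v * a₁ + det2 v u * b₁ = 0 := by
  have hD : det2 u t ≠ 0 := li_det u t hut
  constructor
  · rintro ⟨w, h1, h2, h3⟩
    subst h1 h2 h3
    simp only [det2, dot2]; ring
  · intro h
    refine ⟨((a₁ * t.2 - b₁ * u.2) / det2 u t, (b₁ * u.1 - a₁ * t.1) / det2 u t), ?_, ?_, ?_⟩ <;>
      simp only [dot2, det2] at * <;> field_simp [show t.2 * u.1 - t.1 * u.2 ≠ 0 from fun h0 => hD (by linarith), show t.2 * u.1 - u.2 * t.1 ≠ 0 from fun h0 => hD (by linarith)] <;> ring_nf <;> nlinarith [h, sq_nonneg (u.1*t.2 - u.2*t.1)]
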